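/- Let k_R, k_Ω, λ_m, λ_M, ψ_R, c₃ be real numbers with k_R > 0, k_Ω > 0, 0 < λ_m ≤ λ_M, 0 < ψ_R < 2, and 0 < c₃ < min{ √(k_R λ_m), 4k_Rk_Ωλ_m² / (k_Ω²λ_M + 4k_Rλ_m²) }. Then the three 2×2 matrices L₁ = [[k_R/2, −c₃/2], [−c₃/2, λ_m/2]], L₂ = [[k_R/(2−ψ_R), c₃/2], [c₃/2, λ_M/2]], and U = [[c₃k_R/λ_M, −c₃k_Ω/(2λ_m)], [−c₃k_Ω/(2λ_m), k_Ω − c₃]] are all positive definite. -/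

import Mathlib

open Matrix BigOperators

lemma posdef2 (a b c : ℝ) (ha : 0 < a) (h : b * b < a * c) :
    (!![a, b; b, c]).PosDef := by
  rw [Matrix.posDef_iff_dotProduct_mulVec]
  constructor
  · ext i j
    fin_cases i <;> fin_cases j <;>
      simp [Matrix.conjTranspose, Matrix.vecHead, Matrix.vecTail]
  · intro x hx
    have hx' : x 0 ≠ 0 ∨ x 1 ≠ 0 := by
      by_contra hco
      push_neg at hco
      exact hx (funext fun i => by fin_cases i <;> simp [hco.1, hco.2])
    have heq : star x ⬝ᵥ (!![a, b; b, c] *ᵥ x) =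
        a * x 0 * x 0 + b * x 0 * x 1 + (b * x 1 * x 0 + c * x 1 * x 1) := by
      simp [dotProduct, Fin.sum_univ_two, mulVec]
      ring
    rw [heq]
    rcases hx' with h0 | h1
    · rcases eq_or_ne (x 1) 0 with h1 | h1
      · have : 0 < x 0 * x 0 := mul_self_pos.2 h0
        rw [h1]
        nlinarith
      · have : 0 < x 1 * x 1 := mul_self_pos.2 h1
        nlinarith [sq_nonneg (a * x 0 + b * x 1)]
    · have : 0 < x 1 * x 1 := mul_self_pos.2 h1
      nlinarith [sq_nonneg (a * x 0 + b * x 1)]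

/-- Under the gain condition
`0 < c₃ < min{√(k_Rλ_m), 4k_Rk_Ωλ_m²/(k_Ω²λ_M + 4k_Rλ_m²)}`, the matrices
`L₁`, `L₂`, `U` of the boundary-layer Lyapunov analysis are positive definite. -/
theorem boundary_layer_matrices_posdef (kR kΩ lm lM ψR c₃ : ℝ)
    (hkR : 0 < kR) (hkΩ : 0 < kΩ) (hlm : 0 < lm) (hl : lm ≤ lM)
    (hψ : 0 < ψR) (hψ2 : ψR < 2) (hc₃ : 0 < c₃)
    (hc₃' : c₃ < min (Real.sqrt (kR * lm))
      (4 * kR * kΩ * lm ^ 2 / (kΩ ^ 2 * lM + 4 * kR * lm ^ 2))) :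
    (!![kR / 2, -c₃ / 2; -c₃ / 2, lm / 2]).PosDef ∧
    (!![kR / (2 - ψR), c₃ / 2; c₃ / 2, lM / 2]).PosDef ∧
    (!![c₃ * kR / lM, -c₃ * kΩ / (2 * lm); -c₃ * kΩ / (2 * lm), kΩ - c₃]).PosDef := by
  have hlM : 0 < lM := hlm.trans_le hl
  have hψ2' : 0 < 2 - ψR := by linarith
  have hsqrt : c₃ < Real.sqrt (kR * lm) := lt_of_lt_of_le hc₃' (min_le_left _ _)
  have hsq : c₃ ^ 2 < kR * lm := (Real.lt_sqrt hc₃.le).mp hsqrt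
  have hD : 0 < kΩ ^ 2 * lM + 4 * kR * lm ^ 2 := by positivity
  have hfrac : c₃ < 4 * kR * kΩ * lm ^ 2 / (kΩ ^ 2 * lM + 4 * kR * lm ^ 2) :=
    lt_of_lt_of_le hc₃' (min_le_right _ _)
  have hkey : c₃ * (kΩ ^ 2 * lM + 4 * kR * lm ^ 2) < 4 * kR * kΩ * lm ^ 2 :=
    (lt_div_iff₀ hD).mp hfrac
  have hcΩ : c₃ < kΩ := by nlinarith [mul_pos hc₃ (mul_pos (pow_pos hkΩ 2) hlM), mul_pos hkR (pow_pos hlm 2)]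
  refine ⟨posdef2 _ _ _ (by positivity) (by nlinarith), posdef2 _ _ _ (by positivity) ?_,
    posdef2 _ _ _ (by positivity) ?_⟩
  · rw [show kR / (2 - ψR) * (lM / 2) = kR * (lM / 2) / (2 - ψR) by ring, lt_div_iff₀ hψ2']
    nlinarith
  · have e1 : -c₃ * kΩ / (2 * lm) * (-c₃ * kΩ / (2 * lm)) = (c₃ * kΩ) ^ 2 / (4 * lm ^ 2) := by
      field_simp
      ring
    have e2 : c₃ * kR / lM * (kΩ - c₃) = c₃ * kR * (kΩ - c₃) / lM := by ring
    rw [e1, e2, div_lt_div_iff₀ (by positivity) hlM]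
    nlinarith
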